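/- Let C ⊂ V be a proper closed convex full-dimensional cone, s > 1, and f ∈ HConc_s(C) continuously differentiable on C°. Define D(v) = Df(v)/s ∈ V* for v ∈ C°. Let C_T ⊂ C° be a nonempty subcone. If the restriction of f to C_T is strictly log concave (i.e., f(v+x)^{1/s} > f(v)^{1/s} + f(x)^{1/s} whenever v, x ∈ C_T are not proportional), then f satisfies Teissier proportionality on C_T: whenever v, x ∈ C_T satisfy D(v)·x = f(v)^{(s-1)/s} f(x)^{1/s}, the vectors v and x are proportional. -/

import Mathlib

open Set Topology

variable {V : Type*} [NormedAddCommGroup V] [NormedSpace ℝ V] [FiniteDimensional ℝ V]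

/-- The dual cone of `C` inside the continuous dual of `V`. -/
def dualCone (C : Set V) : Set (V →L[ℝ] ℝ) := {w | ∀ v ∈ C, 0 ≤ w v}

/-- The polar transform of a weight-`s` homogeneous function `f` on the cone `C`. -/
noncomputable def polar (C : Set V) (s : ℝ) (f : V → ℝ) (w : V →L[ℝ] ℝ) : ℝ :=
  sInf ((fun v => (w v / f v ^ (1/s)) ^ (s/(s-1))) '' interior C)

theorem strict_log_concave_implies_teissier
    (C : Set V) (hCcl : IsClosed C) (hCcv : Convex ℝ C)
    (hCcone : ∀ v ∈ C, ∀ t : ℝ, 0 ≤ t → t • v ∈ C)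
    (hCproper : ∀ v ∈ C, -v ∈ C → v = 0)
    (hCfull : (interior C).Nonempty)
    (s : ℝ) (hs : 1 < s) (f : V → ℝ)
    (hfusc : UpperSemicontinuousOn f C)
    (hf0 : ∀ v ∈ C, 0 ≤ f v)
    (hfhom : ∀ t : ℝ, 0 ≤ t → ∀ v ∈ C, f (t • v) = t ^ s * f v)
    (hfpos : ∀ v ∈ interior C, 0 < f v)
    (hfconc : ∀ v ∈ C, ∀ x ∈ C, f v ^ (1/s) + f x ^ (1/s) ≤ f (v + x) ^ (1/s))
    (hfC1 : ContDiffOn ℝ 1 f (interior C))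
    (T : Set V) (hTsub : T ⊆ interior C) (hTne : T.Nonempty)
    (hTcone : ∀ v ∈ T, ∀ t : ℝ, 0 < t → t • v ∈ T)
    (hslc : ∀ v ∈ T, ∀ x ∈ T, (¬ ∃ t : ℝ, x = t • v) →
      f v ^ (1/s) + f x ^ (1/s) < f (v + x) ^ (1/s)) :
    ∀ v ∈ T, ∀ x ∈ T,
      fderiv ℝ f v x / s = f v ^ ((s-1)/s) * f x ^ (1/s) → ∃ t : ℝ, x = t • v := by
  intro v hv x hx heq
  by_contra hprop
  have hvC : v ∈ interior C := hTsub hv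
  have hxC : x ∈ interior C := hTsub hx
  have hvC' : v ∈ C := interior_subset hvC
  have hxC' : x ∈ C := interior_subset hxC
  have hs0 : s ≠ 0 := by linarith
  have hfv : 0 < f v := hfpos v hvC
  have hfx : 0 < f x := hfpos x hxC
  have hadd : ∀ a ∈ C, ∀ b ∈ C, a + b ∈ C := by
    intro a ha b hb
    have h1 : (1/2 : ℝ) • a + (1/2 : ℝ) • b ∈ C :=
      hCcv ha hb (by norm_num) (by norm_num) (by norm_num)
    have h2 := hCcone _ h1 2 (by norm_num)
    have : (2:ℝ) • ((1/2 : ℝ) • a + (1/2 : ℝ) • b) = a + b := by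
      rw [smul_add, smul_smul, smul_smul]; norm_num
    rwa [this] at h2
  have hvx : v + x ∈ C := hadd v hvC' x hxC'
  have hst : f v ^ (1/s) + f x ^ (1/s) < f (v+x) ^ (1/s) := hslc v hv x hx hprop
  -- homogeneity of g = f ^ (1/s)
  have ghom : ∀ t : ℝ, 0 ≤ t → ∀ a ∈ C, f (t • a) ^ (1/s) = t * f a ^ (1/s) := by
    intro t ht a ha
    rw [hfhom t ht a ha, Real.mul_rpow (Real.rpow_nonneg ht s) (hf0 a ha),
      ← Real.rpow_mul ht, mul_one_div_cancel hs0, Real.rpow_one]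
  -- key chord inequality
  have key : ∀ t ∈ Set.Ioo (0:ℝ) 1,
      f (v + x) ^ (1/s) - f v ^ (1/s) ≤ (f (v + t • x) ^ (1/s) - f v ^ (1/s)) / t := by
    intro t ht
    have hdecomp : v + t • x = (1-t) • v + t • (v + x) := by
      rw [smul_add, sub_smul, one_smul]; abel
    have hc := hfconc _ (hCcone v hvC' (1-t) (by linarith [ht.2]))
      _ (hCcone _ hvx t ht.1.le)
    rw [← hdecomp, ghom (1-t) (by linarith [ht.2]) v hvC',
      ghom t ht.1.le (v+x) hvx] at hc
    rw [le_div_iff₀ ht.1]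
    nlinarith [hc]
  -- differentiability and derivative computation
  have hdf : DifferentiableAt ℝ f v :=
    (hfC1.contDiffAt (isOpen_interior.mem_nhds hvC)).differentiableAt one_ne_zero
  have hline : HasDerivAt (fun t : ℝ => v + t • x) x 0 := by
    simpa using ((hasDerivAt_id (0:ℝ)).smul_const x).const_add v
  have h0v : v + (0:ℝ) • x = v := by simp
  have hcomp : HasDerivAt (fun t : ℝ => f (v + t • x)) (fderiv ℝ f v x) 0 := by
    have hF : HasFDerivAt f (fderiv ℝ f v) ((fun t : ℝ => v + t • x) 0) := by
      simpa [h0v] using hdf.hasFDerivAt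
    exact hF.comp_hasDerivAt 0 hline
  have hrpow : HasDerivAt (fun y : ℝ => y ^ (1/s)) ((1/s) * f v ^ (1/s - 1)) (f v) :=
    Real.hasDerivAt_rpow_const (Or.inl hfv.ne')
  have hg : HasDerivAt (fun t : ℝ => f (v + t • x) ^ (1/s))
      ((1/s) * f v ^ (1/s - 1) * fderiv ℝ f v x) 0 := by
    have hr : HasDerivAt (fun y : ℝ => y ^ (1/s)) ((1/s) * f v ^ (1/s - 1))
        ((fun t : ℝ => f (v + t • x)) 0) := by simpa [h0v] using hrpow
    exact hr.comp 0 hcomp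
  -- value of the derivative
  have hBpos : (0:ℝ) < f v ^ ((s-1)/s) := Real.rpow_pos_of_pos hfv _
  have hval : (1/s) * f v ^ (1/s - 1) * fderiv ℝ f v x = f x ^ (1/s) := by
    have heq' : fderiv ℝ f v x = s * (f v ^ ((s-1)/s) * f x ^ (1/s)) := by
      field_simp at heq; linarith
    have hexp : f v ^ ((1:ℝ)/s - 1) = (f v ^ ((s-1)/s))⁻¹ := by
      rw [← Real.rpow_neg hfv.le]
      congr 1
      field_simp
      ring
    rw [heq', hexp]
    field_simp
  rw [hval] at hg
  -- slope inequality
  have hslope : Filter.Tendsto (slope (fun t : ℝ => f (v + t • x) ^ (1/s)) 0)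
      (𝓝[>] (0:ℝ)) (𝓝 (f x ^ (1/s))) :=
    (hasDerivAt_iff_tendsto_slope.mp hg).mono_left
      (nhdsWithin_mono _ (fun t ht => ne_of_gt ht))
  have hge : f (v + x) ^ (1/s) - f v ^ (1/s) ≤ f x ^ (1/s) := by
    refine ge_of_tendsto hslope ?_
    filter_upwards [Ioo_mem_nhdsGT_of_mem (by constructor <;> norm_num : (0:ℝ) ∈ Set.Ico 0 1)]
      with t ht
    simp only [slope_def_field, h0v, sub_zero]
    exact key t ht
  linarith
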